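/- arXiv:2604.16477 — 3 statements merged into one kernel-verified Lean document; each statement's English description precedes it below -/
import Mathlib

section
/- Let e0 and e1 be arbitrary programs, ar an arity, D a polynomial, and b : Bool. If checkSolution ar D n = true for some n, then the witness program S_D ar D b is observationally equivalent to e1 when b = true, and to e0 when b = false. -/
namespace Rice

/-- A program maps an input and a fuel bound to an optional output. -/
def Program := ℕ → ℕ → Option ℕ

/-- Observational equivalence: eventual agreement at every input. -/
def ObsEquiv (e f : Program) : Prop :=
  ∀ x, ∃ N, ∀ k, k ≥ N → e x k = f x k

/-- Stable termination on input 0. -/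
def TerminatesPred (e : Program) : Prop :=
  ∃ fuel v, e 0 fuel = some v ∧ ∀ fuel', fuel' ≥ fuel → e 0 fuel' = some v

/-- A program is stable (monotone in fuel). -/
def Stable (e : Program) : Prop :=
  ∀ x k v, e x k = some v → ∀ k', k' ≥ k → e x k' = some v

/-- The always-diverging program. -/
def diverge : Program := fun _ _ => none

/-- The always-halting program. -/
def halt : Program := fun _ _ => some 0

/-- Integer-coefficient polynomials as lists of monomials. -/
abbrev Poly := List (ℤ × List ℕ)

def evalMonomial (m : ℤ × List ℕ) (vars : List ℕ) : ℤ :=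
  m.1 * (List.foldl (fun acc p => acc * (p.1 : ℤ) ^ p.2) 1 (vars.zip m.2))

def evalPoly (P : Poly) (vars : List ℕ) : ℤ :=
  List.foldl (fun acc m => acc + evalMonomial m vars) 0 P

def cantorPair (a b : ℕ) : ℕ := (a + b) * (a + b + 1) / 2 + b
def cantorW (n : ℕ) : ℕ := (Nat.sqrt (8 * n + 1) - 1) / 2
def cantorUnpairSnd (n : ℕ) : ℕ := n - (cantorW n) * (cantorW n + 1) / 2
def cantorUnpairFst (n : ℕ) : ℕ := cantorW n - cantorUnpairSnd n

def decodeK : ℕ → ℕ → List ℕ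
  | 0, _ => []
  | 1, n => [n]
  | k + 2, n => decodeK (k + 1) (cantorUnpairFst n) ++ [cantorUnpairSnd n]

def checkSolution (ar : ℕ) (P : Poly) (n : ℕ) : Bool :=
  decide (evalPoly P (decodeK ar n) = 0)

def isSolvable (ar : ℕ) (P : Poly) : Prop := ∃ n, checkSolution ar P n = true
def isUnsolvable (ar : ℕ) (P : Poly) : Prop := ∀ n, checkSolution ar P n = false

def findSol (ar : ℕ) (P : Poly) : ℕ → Option ℕ
  | 0 => if checkSolution ar P 0 then some 0 else none
  | k + 1 =>
    match findSol ar P k with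
    | some n => some n
    | none => if checkSolution ar P (k + 1) then some (k + 1) else none

/-- The two-witness construction. -/
def S_D (e0 e1 : Program) (ar : ℕ) (D : Poly) (b : Bool) : Program :=
  fun x fuel =>
    match findSol ar D fuel with
    | some _ => (if b then e1 else e0) x fuel
    | none => none

/-- h10c constraints. -/
inductive h10c where
  | one : ℕ → h10c
  | plus : ℕ → ℕ → ℕ → h10c
  | mult : ℕ → ℕ → ℕ → h10c

def h10cSem (c : h10c) (φ : ℕ → ℕ) : Prop :=
  match c with
  | .one x => φ x = 1
  | .plus x y z => φ x + φ y = φ z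
  | .mult x y z => φ x * φ y = φ z

def H10C_SAT (cs : List h10c) : Prop := ∃ φ : ℕ → ℕ, ∀ c ∈ cs, h10cSem c φ

/-- Nat-coefficient polynomials. -/
abbrev NatPoly := List (ℕ × List ℕ)

def evalNatMonomial (m : ℕ × List ℕ) (vars : List ℕ) : ℕ :=
  m.1 * (List.foldl (fun acc p => acc * p.1 ^ p.2) 1 (vars.zip m.2))

def evalNatPoly (P : NatPoly) (vars : List ℕ) : ℕ :=
  List.foldl (fun acc m => acc + evalNatMonomial m vars) 0 P

def posMonomials (P : Poly) : NatPoly :=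
  P.filterMap (fun m => if 0 < m.1 then some (m.1.toNat, m.2) else none)

def negMonomials (P : Poly) : NatPoly :=
  P.filterMap (fun m => if m.1 < 0 then some ((-m.1).toNat, m.2) else none)

/-- An h10c instance: arity, positive part, negative part. -/
abbrev H10cInst := ℕ × NatPoly × NatPoly

def H10cSat (inst : H10cInst) : Prop :=
  ∃ n, evalNatPoly inst.2.1 (decodeK inst.1 n) = evalNatPoly inst.2.2 (decodeK inst.1 n)

def h10cToPoly (inst : H10cInst) : Poly :=
  inst.2.1.map (fun m => ((m.1 : ℤ), m.2)) ++ inst.2.2.map (fun m => (-(m.1 : ℤ), m.2))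

/-- Pointwise addition of exponent lists. -/
def map2Add : List ℕ → List ℕ → List ℕ
  | x :: xs, y :: ys => (x + y) :: map2Add xs ys
  | _, _ => []

def monoMult (m1 m2 : ℕ × List ℕ) : ℕ × List ℕ := (m1.1 * m2.1, map2Add m1.2 m2.2)

def polyMult (p1 p2 : NatPoly) : NatPoly := p1.flatMap (fun m1 => p2.map (monoMult m1))

def polyScale (c : ℕ) (p : NatPoly) : NatPoly := p.map (fun m => (c * m.1, m.2))

def polySq (p : NatPoly) : NatPoly := polyMult p p

/-- Sum-of-squares conjunction encoding. -/
def conjEncode : List (NatPoly × NatPoly) → NatPoly × NatPoly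
  | [] => ([], [])
  | (p, n) :: rest =>
    let r := conjEncode rest
    (polySq p ++ polySq n ++ r.1, polyScale 2 (polyMult p n) ++ r.2)

/-- All exponent lists have length k. -/
def allLen (k : ℕ) (p : NatPoly) : Prop := ∀ m ∈ p, m.2.length = k

theorem findSol_isSome (ar : ℕ) (D : Poly) (n : ℕ) (h : checkSolution ar D n = true) :
    ∀ k, k ≥ n → (findSol ar D k).isSome := by
  intro k hk
  induction k with
  | zero =>
    interval_cases n
    simp [findSol, h]
  | succ k ih =>
    rcases Nat.lt_or_ge n (k+1) with h1 | h1
    · have := ih (Nat.lt_succ_iff.mp h1)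
      simp [findSol]
      rcases hs : findSol ar D k with _ | m
      · simp [hs] at this
      · simp
    · have : n = k + 1 := le_antisymm hk h1
      subst this
      simp [findSol]
      rcases hs : findSol ar D k with _ | m <;> simp [h]

/-- When D is solvable, the witness program behaves like the chosen witness. -/
theorem S_D_solvable_equiv (e0 e1 : Program) (ar : ℕ) (D : Poly) (b : Bool) (n : ℕ)
    (h : checkSolution ar D n = true) :
    ObsEquiv (S_D e0 e1 ar D b) (if b then e1 else e0) := by
  intro x
  refine ⟨n, fun k hk => ?_⟩
  have := findSol_isSome ar D n h k hk
  rcases hs : findSol ar D k with _ | m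
  · simp [hs] at this
  · simp [S_D, hs]


end Rice
end

section
/- Assume there is no function f : List h10c → Bool such that f cs = true whenever H10C_SAT cs and f cs = false whenever ¬H10C_SAT cs. Then there is no function F : ℕ → Poly → ℤ such that F ar D = 1 whenever isSolvable ar D and F ar D = 0 whenever isUnsolvable ar D. (MRDP undecidability for the polynomial model, derived from H10C undecidability.) -/
namespace Rice

/-! ### Auxiliary development for MRDP_from_H10C -/

section FoldAux

lemma foldl_add_init {M : Type*} [AddCommMonoid M] {α : Type*} (g : α → M) :
    ∀ (l : List α) (c : M),
      l.foldl (fun a x => a + g x) c = c + l.foldl (fun a x => a + g x) 0 := by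
  intro l
  induction l with
  | nil => simp
  | cons x xs ih =>
    intro c
    simp only [List.foldl_cons]
    rw [ih, ih (0 + g x), zero_add, add_assoc]

lemma foldl_mul_init :
    ∀ (l : List (ℕ × ℕ)) (c : ℕ),
      l.foldl (fun a p => a * p.1 ^ p.2) c = c * l.foldl (fun a p => a * p.1 ^ p.2) 1 := by
  intro l
  induction l with
  | nil => simp
  | cons x xs ih =>
    intro c
    simp only [List.foldl_cons]
    rw [ih, ih (1 * x.1 ^ x.2), one_mul, mul_assoc]

lemma foldl_cast :
    ∀ (l : List (ℕ × ℕ)) (c : ℕ),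
      ((l.foldl (fun a p => a * p.1 ^ p.2) c : ℕ) : ℤ)
        = l.foldl (fun a p => a * (p.1 : ℤ) ^ p.2) (c : ℤ) := by
  intro l
  induction l with
  | nil => simp
  | cons x xs ih =>
    intro c
    simp only [List.foldl_cons]
    rw [ih]
    push_cast
    ring_nf

end FoldAux

/-- product of vars^exponents -/
def prodExp (vars es : List ℕ) : ℕ :=
  List.foldl (fun acc p => acc * p.1 ^ p.2) 1 (vars.zip es)

lemma prodExp_nil (es : List ℕ) : prodExp [] es = 1 := rfl

lemma prodExp_nil_right (vars : List ℕ) : prodExp vars [] = 1 := by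
  simp [prodExp]

lemma prodExp_cons (v a : ℕ) (vs as : List ℕ) :
    prodExp (v :: vs) (a :: as) = v ^ a * prodExp vs as := by
  unfold prodExp
  rw [List.zip_cons_cons, List.foldl_cons, foldl_mul_init, one_mul]

lemma prodExp_zeros : ∀ (vars : List ℕ) (k : ℕ), prodExp vars (List.replicate k 0) = 1 := by
  intro vars
  induction vars with
  | nil => intro k; rfl
  | cons v vs ih =>
    intro k
    cases k with
    | zero => exact prodExp_nil_right _
    | succ k => rw [List.replicate_succ, prodExp_cons, ih, pow_zero, one_mul]

lemma prodExp_append_zeros :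
    ∀ (vars es : List ℕ) (k : ℕ), prodExp vars (es ++ List.replicate k 0) = prodExp vars es := by
  intro vars
  induction vars with
  | nil => intro es k; rfl
  | cons v vs ih =>
    intro es k
    cases es with
    | nil => rw [List.nil_append, prodExp_zeros, prodExp_nil_right]
    | cons a as => rw [List.cons_append, prodExp_cons, prodExp_cons, ih]

lemma prodExp_unit :
    ∀ (vars : List ℕ) (x : ℕ), prodExp vars (List.replicate x 0 ++ [1]) = vars.getD x 1 := by
  intro vars
  induction vars with
  | nil => intro x; rfl
  | cons v vs ih =>
    intro x
    cases x with
    | zero =>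
      simp only [List.replicate_zero, List.nil_append, List.getD_cons_zero]
      rw [prodExp_cons, prodExp_nil_right, pow_one, mul_one]
    | succ x =>
      rw [List.replicate_succ, List.cons_append, prodExp_cons, pow_zero, one_mul, ih]
      rfl

/-- Unit exponent vector of length `k` (when `x < k`). -/
def unitE (k x : ℕ) : List ℕ := (List.replicate x 0 ++ [1]) ++ List.replicate (k - (x + 1)) 0

lemma prodExp_unitE (vars : List ℕ) (k x : ℕ) : prodExp vars (unitE k x) = vars.getD x 1 := by
  rw [unitE, prodExp_append_zeros, prodExp_unit]

lemma unitE_length {k x : ℕ} (h : x < k) : (unitE k x).length = k := by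
  simp [unitE]
  omega

lemma map2Add_length : ∀ (e1 e2 : List ℕ), e1.length = e2.length →
    (map2Add e1 e2).length = e1.length := by
  intro e1
  induction e1 with
  | nil =>
    intro e2 h
    cases e2 with
    | nil => rfl
    | cons b bs => simp at h
  | cons a as ih =>
    intro e2 h
    cases e2 with
    | nil => simp at h
    | cons b bs =>
      simp only [map2Add, List.length_cons] at *
      rw [ih bs (by omega)]

lemma prodExp_map2Add :
    ∀ (e1 e2 vars : List ℕ), e1.length = e2.length →
      prodExp vars (map2Add e1 e2) = prodExp vars e1 * prodExp vars e2 := by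
  intro e1
  induction e1 with
  | nil =>
    intro e2 vars h
    cases e2 with
    | nil => simp [map2Add, prodExp_nil_right]
    | cons b bs => simp at h
  | cons a as ih =>
    intro e2 vars h
    cases e2 with
    | nil => simp at h
    | cons b bs =>
      cases vars with
      | nil => simp [prodExp_nil]
      | cons v vs =>
        simp only [map2Add, prodExp_cons]
        rw [ih bs vs (by simpa using h), pow_add]
        ring

/-! ### evaluation lemmas for NatPoly -/

lemma evalNatMonomial_eq (m : ℕ × List ℕ) (vars : List ℕ) :
    evalNatMonomial m vars = m.1 * prodExp vars m.2 := rfl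

lemma evalNatPoly_nil (vars : List ℕ) : evalNatPoly [] vars = 0 := rfl

lemma evalNatPoly_cons (m : ℕ × List ℕ) (P : NatPoly) (vars : List ℕ) :
    evalNatPoly (m :: P) vars = evalNatMonomial m vars + evalNatPoly P vars := by
  unfold evalNatPoly
  rw [List.foldl_cons, foldl_add_init (fun m => evalNatMonomial m vars), zero_add]

lemma evalNatPoly_append (P Q : NatPoly) (vars : List ℕ) :
    evalNatPoly (P ++ Q) vars = evalNatPoly P vars + evalNatPoly Q vars := by
  induction P with
  | nil => simp [evalNatPoly_nil]
  | cons m P ih => simp [evalNatPoly_cons, ih, add_assoc]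

lemma evalNatPoly_map_monoMult (k : ℕ) (m : ℕ × List ℕ) (hm : m.2.length = k) :
    ∀ (q : NatPoly), allLen k q → ∀ vars,
      evalNatPoly (q.map (monoMult m)) vars = evalNatMonomial m vars * evalNatPoly q vars := by
  intro q
  induction q with
  | nil => intro _ vars; simp [evalNatPoly_nil]
  | cons m2 q ih =>
    intro hq vars
    have hm2 : m2.2.length = k := hq m2 (by simp)
    simp only [List.map_cons, evalNatPoly_cons]
    rw [ih (fun x hx => hq x (by simp [hx])) vars]
    have : evalNatMonomial (monoMult m m2) vars
        = evalNatMonomial m vars * evalNatMonomial m2 vars := by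
      simp only [evalNatMonomial_eq, monoMult]
      rw [prodExp_map2Add m.2 m2.2 vars (by rw [hm, hm2])]
      ring
    rw [this]
    ring

lemma evalNatPoly_polyMult (k : ℕ) :
    ∀ (p q : NatPoly), allLen k p → allLen k q → ∀ vars,
      evalNatPoly (polyMult p q) vars = evalNatPoly p vars * evalNatPoly q vars := by
  intro p
  induction p with
  | nil => intro q _ _ vars; simp [polyMult, evalNatPoly_nil]
  | cons m p ih =>
    intro q hp hq vars
    have hm : m.2.length = k := hp m (by simp)
    simp only [polyMult, List.flatMap_cons] at *
    rw [evalNatPoly_append, evalNatPoly_map_monoMult k m hm q hq vars,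
      ih q (fun x hx => hp x (by simp [hx])) hq vars, evalNatPoly_cons]
    ring

lemma evalNatPoly_polyScale (c : ℕ) :
    ∀ (p : NatPoly) (vars : List ℕ),
      evalNatPoly (polyScale c p) vars = c * evalNatPoly p vars := by
  intro p
  induction p with
  | nil => intro vars; simp [polyScale, evalNatPoly_nil]
  | cons m p ih =>
    intro vars
    simp only [polyScale, List.map_cons] at *
    rw [evalNatPoly_cons, evalNatPoly_cons, ih]
    simp only [evalNatMonomial_eq]
    ring

/-! ### ℤ-polynomial evaluation -/

lemma evalPoly_nil (vars : List ℕ) : evalPoly [] vars = 0 := rfl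

lemma evalPoly_cons (m : ℤ × List ℕ) (P : Poly) (vars : List ℕ) :
    evalPoly (m :: P) vars = evalMonomial m vars + evalPoly P vars := by
  unfold evalPoly
  rw [List.foldl_cons, foldl_add_init (fun m => evalMonomial m vars), zero_add]

lemma evalPoly_append (P Q : Poly) (vars : List ℕ) :
    evalPoly (P ++ Q) vars = evalPoly P vars + evalPoly Q vars := by
  induction P with
  | nil => simp [evalPoly_nil]
  | cons m P ih => simp [evalPoly_cons, ih, add_assoc]

lemma evalMonomial_cast (c : ℕ) (es : List ℕ) (vars : List ℕ) :
    evalMonomial ((c : ℤ), es) vars = (evalNatMonomial (c, es) vars : ℤ) := by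
  simp only [evalMonomial, evalNatMonomial]
  rw [Nat.cast_mul, foldl_cast]
  norm_num

lemma evalPoly_h10cToPoly (ar : ℕ) (P N : NatPoly) (vars : List ℕ) :
    evalPoly (h10cToPoly (ar, P, N)) vars
      = (evalNatPoly P vars : ℤ) - (evalNatPoly N vars : ℤ) := by
  unfold h10cToPoly
  rw [evalPoly_append]
  have h1 : ∀ (Q : NatPoly), evalPoly (Q.map (fun m => ((m.1 : ℤ), m.2))) vars
      = (evalNatPoly Q vars : ℤ) := by
    intro Q
    induction Q with
    | nil => simp [evalPoly_nil, evalNatPoly_nil]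
    | cons m Q ih =>
      simp only [List.map_cons, evalPoly_cons, evalNatPoly_cons, ih]
      rw [evalMonomial_cast m.1 m.2]
      push_cast
      ring
  have h2 : ∀ (Q : NatPoly), evalPoly (Q.map (fun m => (-(m.1 : ℤ), m.2))) vars
      = -(evalNatPoly Q vars : ℤ) := by
    intro Q
    induction Q with
    | nil => simp [evalPoly_nil, evalNatPoly_nil]
    | cons m Q ih =>
      simp only [List.map_cons, evalPoly_cons, evalNatPoly_cons, ih]
      have : evalMonomial (-(m.1 : ℤ), m.2) vars = -evalMonomial ((m.1 : ℤ), m.2) vars := by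
        simp [evalMonomial]
      rw [this, evalMonomial_cast m.1 m.2]
      push_cast
      ring
  rw [h1, h2]
  ring

/-! ### conjunction encoding -/

lemma nat_amgm (a b : ℕ) : 2 * (a * b) ≤ a * a + b * b := by
  nlinarith [sq_nonneg ((a : ℤ) - (b : ℤ))]

lemma nat_amgm_eq {a b : ℕ} (h : a * a + b * b = 2 * (a * b)) : a = b := by
  have h2 : ((a : ℤ) - b) ^ 2 = 0 := by nlinarith
  have := pow_eq_zero_iff (n := 2) (by norm_num) |>.mp h2
  omega

lemma conj_spec (k : ℕ) :
    ∀ (L : List (NatPoly × NatPoly)) (vars : List ℕ),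
      (∀ pr ∈ L, allLen k pr.1 ∧ allLen k pr.2) →
      evalNatPoly (conjEncode L).2 vars ≤ evalNatPoly (conjEncode L).1 vars ∧
      (evalNatPoly (conjEncode L).1 vars = evalNatPoly (conjEncode L).2 vars ↔
        ∀ pr ∈ L, evalNatPoly pr.1 vars = evalNatPoly pr.2 vars) := by
  intro L
  induction L with
  | nil => intro vars _; simp [conjEncode, evalNatPoly_nil]
  | cons pr L ih =>
    intro vars hL
    obtain ⟨p, n⟩ := pr
    have hp : allLen k p := (hL (p, n) (by simp)).1
    have hn : allLen k n := (hL (p, n) (by simp)).2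
    obtain ⟨ihle, ihiff⟩ := ih vars (fun x hx => hL x (by simp [hx]))
    simp only [conjEncode]
    rw [evalNatPoly_append, evalNatPoly_append, evalNatPoly_append]
    unfold polySq
    rw [evalNatPoly_polyMult k p p hp hp, evalNatPoly_polyMult k n n hn hn,
      evalNatPoly_polyScale, evalNatPoly_polyMult k p n hp hn]
    set a := evalNatPoly p vars
    set b := evalNatPoly n vars
    set S1 := evalNatPoly (conjEncode L).1 vars
    set S2 := evalNatPoly (conjEncode L).2 vars
    have hab := nat_amgm a b
    constructor
    · omega
    · constructor
      · intro h
        have h1 : a * a + b * b = 2 * (a * b) := by omega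
        have h2 : S1 = S2 := by omega
        intro x hx
        rcases List.mem_cons.mp hx with hx | hx
        · subst hx; exact nat_amgm_eq h1
        · exact ihiff.mp h2 x hx
      · intro h
        have h1 : a = b := h (p, n) (by simp)
        have h2 : S1 = S2 := ihiff.mpr (fun x hx => h x (by simp [hx]))
        rw [h1, h2]
        ring

/-! ### Cantor pairing inverses -/

lemma cantorW_pair (a b : ℕ) : cantorW (cantorPair a b) = a + b := by
  set t := a + b with ht
  have heven : 2 ∣ t * (t + 1) := (Nat.even_mul_succ_self t).two_dvd
  have hdiv : t * (t + 1) / 2 * 2 = t * (t + 1) := Nat.div_mul_cancel heven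
  have hn : cantorPair a b = t * (t + 1) / 2 + b := by rw [ht]; rfl
  have hb : b ≤ t := by omega
  have hn2 : 8 * cantorPair a b + 1 = 4 * (t * (t + 1)) + 8 * b + 1 := by omega
  have hlow : (2 * t + 1) ^ 2 ≤ 8 * cantorPair a b + 1 := by nlinarith
  have hhigh : 8 * cantorPair a b + 1 < (2 * t + 3) ^ 2 := by nlinarith
  have h1 : 2 * t + 1 ≤ Nat.sqrt (8 * cantorPair a b + 1) := Nat.le_sqrt'.mpr hlow
  have h2 : Nat.sqrt (8 * cantorPair a b + 1) < 2 * t + 3 := by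
    by_contra h
    push_neg at h
    have h3 := Nat.sqrt_le' (8 * cantorPair a b + 1)
    nlinarith
  unfold cantorW
  omega

lemma cantorUnpairSnd_pair (a b : ℕ) : cantorUnpairSnd (cantorPair a b) = b := by
  unfold cantorUnpairSnd
  rw [cantorW_pair]
  unfold cantorPair
  omega

lemma cantorUnpairFst_pair (a b : ℕ) : cantorUnpairFst (cantorPair a b) = a := by
  unfold cantorUnpairFst
  rw [cantorW_pair, cantorUnpairSnd_pair]
  omega

lemma decodeK_pair (k m a : ℕ) :
    decodeK (k + 2) (cantorPair m a) = decodeK (k + 1) m ++ [a] := by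
  simp [decodeK, cantorUnpairFst_pair, cantorUnpairSnd_pair]

lemma decode_surj (l : List ℕ) : ∃ n, decodeK l.length n = l := by
  induction l using List.reverseRecOn with
  | nil => exact ⟨0, rfl⟩
  | append_singleton l a ih =>
    cases l with
    | nil => exact ⟨a, rfl⟩
    | cons h t =>
      obtain ⟨m, hm⟩ := ih
      refine ⟨cantorPair m a, ?_⟩
      have hlen : ((h :: t) ++ [a]).length = t.length + 2 := by simp
      rw [hlen, decodeK_pair]
      simp only [List.length_cons] at hm
      rw [hm]

/-! ### encoding of h10c constraints -/

def cBound : h10c → ℕ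
  | .one x => x + 1
  | .plus x y z => max x (max y z) + 1
  | .mult x y z => max x (max y z) + 1

def csBound (cs : List h10c) : ℕ := cs.foldr (fun c a => max (cBound c) a) 0

lemma cBound_le_csBound {c : h10c} {cs : List h10c} (h : c ∈ cs) : cBound c ≤ csBound cs := by
  induction cs with
  | nil => simp at h
  | cons c' cs ih =>
    rcases List.mem_cons.mp h with h | h
    · subst h; simp [csBound]
    · calc cBound c ≤ csBound cs := ih h
        _ ≤ csBound (c' :: cs) := by simp [csBound]

def cPair (k : ℕ) : h10c → NatPoly × NatPoly
  | .one x => ([(1, unitE k x)], [(1, List.replicate k 0)])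
  | .plus x y z => ([(1, unitE k x), (1, unitE k y)], [(1, unitE k z)])
  | .mult x y z => ([(1, map2Add (unitE k x) (unitE k y))], [(1, unitE k z)])

lemma cPair_allLen {k : ℕ} (c : h10c) (hc : cBound c ≤ k) :
    allLen k (cPair k c).1 ∧ allLen k (cPair k c).2 := by
  cases c with
  | one x =>
    refine ⟨?_, ?_⟩ <;> intro m hm <;> simp [cPair] at hm <;> subst hm <;>
      simp [unitE_length (show x < k by simp [cBound] at hc; omega)]
  | plus x y z =>
    have hx : x < k := by simp [cBound] at hc; omega
    have hy : y < k := by simp [cBound] at hc; omega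
    have hz : z < k := by simp [cBound] at hc; omega
    constructor <;> intro m hm
    · rcases List.mem_cons.mp hm with h | h
      · subst h; exact unitE_length hx
      · simp at h; subst h; exact unitE_length hy
    · simp [cPair] at hm; subst hm; exact unitE_length hz
  | mult x y z =>
    have hx : x < k := by simp [cBound] at hc; omega
    have hy : y < k := by simp [cBound] at hc; omega
    have hz : z < k := by simp [cBound] at hc; omega
    constructor <;> intro m hm <;> simp [cPair] at hm <;> subst hm
    · rw [map2Add_length _ _ (by rw [unitE_length hx, unitE_length hy])]
      exact unitE_length hx
    · exact unitE_length hz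

lemma evalNatPoly_single (c : ℕ) (e : List ℕ) (vars : List ℕ) :
    evalNatPoly [(c, e)] vars = c * prodExp vars e := by
  rw [evalNatPoly_cons, evalNatPoly_nil, evalNatMonomial_eq]
  simp

lemma cPair_iff (k : ℕ) (c : h10c) (hc : cBound c ≤ k) (vars : List ℕ) :
    (evalNatPoly (cPair k c).1 vars = evalNatPoly (cPair k c).2 vars ↔
      h10cSem c (fun i => vars.getD i 1)) := by
  cases c with
  | one x =>
    simp only [cPair, h10cSem]
    rw [evalNatPoly_single, evalNatPoly_single, prodExp_unitE, prodExp_zeros]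
    simp
  | plus x y z =>
    simp only [cPair, h10cSem]
    rw [evalNatPoly_cons, evalNatPoly_single, evalNatPoly_single, evalNatMonomial_eq]
    simp only [prodExp_unitE, one_mul]
  | mult x y z =>
    have hx : x < k := by simp [cBound] at hc; omega
    have hy : y < k := by simp [cBound] at hc; omega
    simp only [cPair, h10cSem]
    rw [evalNatPoly_single, evalNatPoly_single,
      prodExp_map2Add _ _ _ (by rw [unitE_length hx, unitE_length hy]),
      prodExp_unitE, prodExp_unitE, prodExp_unitE]
    simp

lemma h10cSem_congr (c : h10c) (φ ψ : ℕ → ℕ) (h : ∀ i < cBound c, φ i = ψ i) :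
    h10cSem c φ ↔ h10cSem c ψ := by
  cases c with
  | one x => simp only [h10cSem]; rw [h x (by simp [cBound])]
  | plus x y z =>
    simp only [h10cSem]
    rw [h x (by simp [cBound]), h y (by simp [cBound]),
      h z (by simp [cBound])]
  | mult x y z =>
    simp only [h10cSem]
    rw [h x (by simp [cBound]), h y (by simp [cBound]),
      h z (by simp [cBound])]

/-- The full reduction: cs ↦ (arity, poly). -/
def encodeCS (cs : List h10c) : ℕ × Poly :=
  (csBound cs,
    h10cToPoly (csBound cs, conjEncode (cs.map (cPair (csBound cs)))))

lemma getD_range_map (k : ℕ) (φ : ℕ → ℕ) (i : ℕ) (hi : i < k) :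
    ((List.range k).map φ).getD i 1 = φ i := by
  have hlen : i < ((List.range k).map φ).length := by simpa using hi
  rw [List.getD_eq_getElem _ _ hlen]
  simp

lemma encode_correct (cs : List h10c) :
    H10C_SAT cs ↔ isSolvable (encodeCS cs).1 (encodeCS cs).2 := by
  set k := csBound cs with hk
  set L := cs.map (cPair k) with hLdef
  have hL : ∀ pr ∈ L, allLen k pr.1 ∧ allLen k pr.2 := by
    intro pr hpr
    rw [hLdef] at hpr
    obtain ⟨c, hc, rfl⟩ := List.mem_map.mp hpr
    exact cPair_allLen c (cBound_le_csBound hc)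
  have hcheck : ∀ vars : List ℕ,
      (evalPoly (encodeCS cs).2 vars = 0 ↔ ∀ c ∈ cs, h10cSem c (fun i => vars.getD i 1)) := by
    intro vars
    show evalPoly (h10cToPoly (k, conjEncode L)) vars = 0 ↔ _
    rw [show h10cToPoly (k, conjEncode L)
        = h10cToPoly (k, (conjEncode L).1, (conjEncode L).2) by rfl]
    rw [evalPoly_h10cToPoly, sub_eq_zero]
    rw [show ((evalNatPoly (conjEncode L).1 vars : ℤ) = (evalNatPoly (conjEncode L).2 vars : ℤ))
        ↔ evalNatPoly (conjEncode L).1 vars = evalNatPoly (conjEncode L).2 vars from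
        Nat.cast_inj]
    rw [(conj_spec k L vars hL).2]
    constructor
    · intro h c hc
      exact (cPair_iff k c (cBound_le_csBound hc) vars).mp
        (h (cPair k c) (by rw [hLdef]; exact List.mem_map_of_mem hc))
    · intro h pr hpr
      rw [hLdef] at hpr
      obtain ⟨c, hc, rfl⟩ := List.mem_map.mp hpr
      exact (cPair_iff k c (cBound_le_csBound hc) vars).mpr (h c hc)
  constructor
  · rintro ⟨φ, hφ⟩
    set vars := (List.range k).map φ with hv
    obtain ⟨n, hn⟩ := decode_surj vars
    have hlen : vars.length = k := by simp [hv]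
    refine ⟨n, ?_⟩
    unfold checkSolution
    rw [decide_eq_true_iff]
    rw [hlen] at hn
    rw [show (encodeCS cs).1 = k from rfl, hn, hcheck vars]
    intro c hc
    rw [← h10cSem_congr c φ _ (fun i hi =>
      (getD_range_map k φ i (lt_of_lt_of_le hi (cBound_le_csBound hc))).symm)]
    exact hφ c hc
  · rintro ⟨n, hn⟩
    unfold checkSolution at hn
    rw [decide_eq_true_iff] at hn
    rw [hcheck _] at hn
    exact ⟨_, hn⟩

/-- MRDP undecidability for the polynomial model, derived from H10C undecidability. -/
theorem MRDP_from_H10C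
    (hH10C : ¬ ∃ f : List h10c → Bool,
      (∀ cs, H10C_SAT cs → f cs = true) ∧
      (∀ cs, ¬ H10C_SAT cs → f cs = false)) :
    ¬ ∃ F : ℕ → Poly → ℤ,
      (∀ ar D, isSolvable ar D → F ar D = 1) ∧
      (∀ ar D, isUnsolvable ar D → F ar D = 0) := by
  rintro ⟨F, hF1, hF0⟩
  apply hH10C
  refine ⟨fun cs => decide (F (encodeCS cs).1 (encodeCS cs).2 = 1), ?_, ?_⟩
  · intro cs hsat
    rw [decide_eq_true_iff]
    exact hF1 _ _ ((encode_correct cs).mp hsat)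
  · intro cs hunsat
    have hns : ¬ isSolvable (encodeCS cs).1 (encodeCS cs).2 :=
      fun h => hunsat ((encode_correct cs).mpr h)
    have huns : isUnsolvable (encodeCS cs).1 (encodeCS cs).2 := by
      intro n
      cases h : checkSolution (encodeCS cs).1 (encodeCS cs).2 n with
      | false => rfl
      | true => exact absurd ⟨n, h⟩ hns
    have hz := hF0 _ _ huns
    simp [hz]


end Rice
end

section
/- The encoding of a polynomial as an h10c instance is correct: for every arity ar and polynomial P, isSolvable ar P holds if and only if H10cSat (ar, posMonomials P, negMonomials P) holds, i.e., there exists n with evalNatPoly (posMonomials P) (decodeK ar n) = evalNatPoly (negMonomials P) (decodeK ar n). -/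
namespace Rice

lemma foldl_add_shift (g : (ℤ × List ℕ) → ℤ) (c : ℤ) (l : Poly) :
    List.foldl (fun acc m => acc + g m) c l = c + List.foldl (fun acc m => acc + g m) 0 l := by
  induction l generalizing c with
  | nil => simp
  | cons a l ih => simp only [List.foldl_cons]; rw [ih, ih (0 + g a)]; ring

lemma foldl_add_shift_nat (g : (ℕ × List ℕ) → ℕ) (c : ℕ) (l : NatPoly) :
    List.foldl (fun acc m => acc + g m) c l = c + List.foldl (fun acc m => acc + g m) 0 l := by
  induction l generalizing c with
  | nil => simp
  | cons a l ih => simp only [List.foldl_cons]; rw [ih, ih (0 + g a)]; ring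

lemma monomial_cast (c : ℤ) (es vars : List ℕ) (hc : 0 ≤ c) :
    evalMonomial (c, es) vars = (evalNatMonomial (c.toNat, es) vars : ℤ) := by
  simp only [evalMonomial, evalNatMonomial]
  push_cast [Int.toNat_of_nonneg hc]
  congr 1
  induction vars.zip es using List.reverseRecOn with
  | nil => simp
  | append_singleton l a ih => simp [ih]

lemma evalPoly_eq_sub (P : Poly) (vars : List ℕ) :
    evalPoly P vars =
      (evalNatPoly (posMonomials P) vars : ℤ) - (evalNatPoly (negMonomials P) vars : ℤ) := by
  induction P with
  | nil => simp [evalPoly, evalNatPoly, posMonomials, negMonomials]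
  | cons m P ih =>
    obtain ⟨c, es⟩ := m
    rw [evalPoly_cons, ih]
    rcases lt_trichotomy c 0 with h | h | h
    · have hp : posMonomials ((c, es) :: P) = posMonomials P := by
        simp [posMonomials, List.filterMap_cons, not_lt.mpr h.le]
      have hn : negMonomials ((c, es) :: P) = ((-c).toNat, es) :: negMonomials P := by
        simp [negMonomials, List.filterMap_cons, h]
      rw [hp, hn, evalNatPoly_cons]
      push_cast
      have : evalMonomial (c, es) vars = -(evalNatMonomial ((-c).toNat, es) vars : ℤ) := by
        rw [← monomial_cast (-c) es vars (by omega)]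
        simp [evalMonomial]
      rw [this]; ring
    · subst h
      have hp : posMonomials ((0, es) :: P) = posMonomials P := by
        simp [posMonomials, List.filterMap_cons]
      have hn : negMonomials ((0, es) :: P) = negMonomials P := by
        simp [negMonomials, List.filterMap_cons]
      rw [hp, hn]
      simp [evalMonomial]
    · have hp : posMonomials ((c, es) :: P) = (c.toNat, es) :: posMonomials P := by
        simp [posMonomials, List.filterMap_cons, h]
      have hn : negMonomials ((c, es) :: P) = negMonomials P := by
        simp [negMonomials, List.filterMap_cons, not_lt.mpr h.le]
      rw [hp, hn, evalNatPoly_cons, monomial_cast c es vars h.le]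
      push_cast
      ring

/-- The encoding of a polynomial as an h10c instance is correct. -/
theorem poly_encode_correct (ar : ℕ) (P : Poly) :
    isSolvable ar P ↔
      ∃ n, evalNatPoly (posMonomials P) (decodeK ar n) =
           evalNatPoly (negMonomials P) (decodeK ar n) := by
  unfold isSolvable checkSolution
  constructor <;> rintro ⟨n, hn⟩ <;> refine ⟨n, ?_⟩
  · have h := of_decide_eq_true hn
    rw [evalPoly_eq_sub] at h
    exact_mod_cast sub_eq_zero.mp h
  · exact decide_eq_true (by rw [evalPoly_eq_sub, hn, sub_self])

end Rice
end
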